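/- If û is a solution of the Fourier-space equation for the parameter ξ with û(0) = û₀ and û'(0) = û₁, then for all t ≥ 0: |û'(t)|² + (1/4) log²(1 + |ξ|²)|û(t)|² + (π²/4)|û(t)|² ≤ (9/2) (|û₁|² + (1/4) log²(1 + |ξ|²)|û₀|² + (π²/4)|û₀|²) e^{-φ(ξ) t}. -/

import Mathlib

set_option maxHeartbeats 1000000

open MeasureTheory


lemma energy_decay (a κ μ ω2 : ℝ) (hκ0 : 0 ≤ κ) (hκa : κ ≤ a)
    (hμ : μ = 2/3 * κ) (hκω : κ^2 ≤ ω2) (hω : 0 < ω2)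
    (hkey : (κ*(a-μ))^2 ≤ 4*(2*a-κ-μ)*((κ-μ)*ω2))
    (p p' p'' : ℝ → ℝ)
    (hp : ∀ t, HasDerivAt p (p' t) t)
    (hp' : ∀ t, HasDerivAt p' (p'' t) t)
    (heq : ∀ t, 0 ≤ t → p'' t = -ω2 * p t - a * p' t) :
    ∀ t, 0 ≤ t → p' t ^ 2 + ω2 * p t ^ 2 ≤
      3 * (p' 0 ^ 2 + ω2 * p 0 ^ 2) * Real.exp (-μ * t) := by
  have ha0 : 0 ≤ a := le_trans hκ0 hκa
  have hμ0 : 0 ≤ μ := by rw [hμ]; linarith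
  obtain ⟨F, hFdef⟩ : ∃ F : ℝ → ℝ,
      F = fun s => p' s ^ 2 + ω2 * p s ^ 2 + κ * (p s * p' s) := ⟨_, rfl⟩
  obtain ⟨F', hF'def⟩ : ∃ F' : ℝ → ℝ,
      F' = fun s => 2 * p' s * p'' s + ω2 * (2 * p s * p' s)
        + κ * (p' s * p' s + p s * p'' s) := ⟨_, rfl⟩
  have hF : ∀ t, HasDerivAt F (F' t) t := by
    intro t
    rw [hFdef, hF'def]
    have h1 : HasDerivAt (fun s => p' s ^ 2) (2 * p' t * p'' t) t := by
      simpa using ((hp' t).fun_pow 2)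
    have h2 : HasDerivAt (fun s => ω2 * p s ^ 2) (ω2 * (2 * p t * p' t)) t := by
      simpa using (((hp t).pow 2).const_mul ω2)
    have h3 : HasDerivAt (fun s => κ * (p s * p' s))
        (κ * (p' t * p' t + p t * p'' t)) t :=
      (((hp t).mul (hp' t)).const_mul κ).congr_deriv (by ring)
    exact (h1.add h2).add h3
  obtain ⟨g, hgdef⟩ : ∃ g : ℝ → ℝ, g = fun s => F s * Real.exp (μ * s) := ⟨_, rfl⟩
  have hg : ∀ t, HasDerivAt g ((F' t + μ * F t) * Real.exp (μ * t)) t := by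
    intro t
    rw [hgdef]
    have he : HasDerivAt (fun s => Real.exp (μ * s)) (Real.exp (μ * t) * μ) t := by
      have : HasDerivAt (fun s : ℝ => μ * s) (μ * 1) t := (hasDerivAt_id t).const_mul μ
      exact this.exp.congr_deriv (by ring)
    exact ((hF t).mul he).congr_deriv (by ring)
  have hderiv_nonpos : ∀ x ∈ interior (Set.Ici (0:ℝ)), deriv g x ≤ 0 := by
    intro x hx
    rw [interior_Ici] at hx
    have hx0 : (0:ℝ) ≤ x := le_of_lt hx
    rw [(hg x).deriv]
    have hFμ : F' x + μ * F x ≤ 0 := by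
      have hpp := heq x hx0
      have hA : 0 ≤ 2*a - κ - μ := by rw [hμ] at *; linarith
      have hB : 0 ≤ (κ - μ) * ω2 := by
        apply mul_nonneg _ hω.le
        rw [hμ]; linarith
      have expand : F' x + μ * F x =
          -((2*a - κ - μ) * p' x ^ 2 + ((κ - μ) * ω2) * p x ^ 2
            + (κ * (a - μ)) * (p x * p' x)) := by
        rw [hFdef, hF'def]
        simp only [hpp]; ring
      rw [expand, neg_nonpos]
      rcases eq_or_lt_of_le ha0 with h0 | hapos
      · have hκ' : κ = 0 := le_antisymm (h0 ▸ hκa) hκ0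
        have hμ' : μ = 0 := by rw [hμ, hκ']; ring
        rw [hκ', hμ', ← h0]; norm_num
      · have hApos : 0 < 2*a - κ - μ := by rw [hμ] at *; linarith
        nlinarith [sq_nonneg (2*(2*a - κ - μ) * p' x + (κ*(a-μ)) * p x),
          mul_nonneg (show (0:ℝ) ≤ 4*(2*a-κ-μ)*((κ-μ)*ω2) - (κ*(a-μ))^2 by linarith)
            (sq_nonneg (p x)),
          mul_nonneg hB (sq_nonneg (p x)), hApos]
    exact mul_nonpos_of_nonpos_of_nonneg hFμ (Real.exp_pos _).le
  have hanti : AntitoneOn g (Set.Ici (0:ℝ)) :=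
    antitoneOn_of_deriv_nonpos (convex_Ici 0)
      (fun x _ => (hg x).continuousAt.continuousWithinAt)
      (fun x _ => (hg x).differentiableAt.differentiableWithinAt)
      hderiv_nonpos
  intro t ht
  have hgt : g t ≤ g 0 := hanti (Set.self_mem_Ici) ht ht
  have hexp : (0:ℝ) < Real.exp (μ * t) := Real.exp_pos _
  have hFt : F t * Real.exp (μ * t) ≤ F 0 := by
    rw [hgdef] at hgt
    simpa using hgt
  have hlow : (1/2) * (p' t ^ 2 + ω2 * p t ^ 2) ≤ F t := by
    rw [hFdef]
    nlinarith [sq_nonneg (p' t + κ * p t), sq_nonneg (p t), hκω]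
  have hhigh : F 0 ≤ (3/2) * (p' 0 ^ 2 + ω2 * p 0 ^ 2) := by
    rw [hFdef]
    nlinarith [sq_nonneg (p' 0 - κ * p 0), sq_nonneg (p 0), hκω]
  have hme : Real.exp (μ*t) * Real.exp (-μ*t) = 1 := by
    rw [← Real.exp_add]; ring_nf; exact Real.exp_zero
  have h1 : F t ≤ F 0 * Real.exp (-μ*t) := by
    have h2 := mul_le_mul_of_nonneg_right hFt (Real.exp_pos (-μ*t)).le
    calc F t = F t * Real.exp (μ*t) * Real.exp (-μ*t) := by rw [mul_assoc, hme, mul_one]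
      _ ≤ F 0 * Real.exp (-μ*t) := h2
  have h3 : 2 * F 0 * Real.exp (-μ*t) ≤ 3 * (p' 0 ^ 2 + ω2 * p 0 ^ 2) * Real.exp (-μ*t) := by
    apply mul_le_mul_of_nonneg_right _ (Real.exp_pos (-μ*t)).le
    linarith
  linarith

/-- The weight function φ from the paper. -/
noncomputable def phi {N : ℕ} (ξ : EuclideanSpace ℝ (Fin N)) : ℝ :=
  if ‖ξ‖ ≤ Real.sqrt (Real.exp (4 / 3 : ℝ) - 1) then
    (2 / 3) * Real.log (1 + ‖ξ‖ ^ 2)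
  else
    8 / 9

/-- Pointwise exponential decay of the natural energy in the Fourier space. -/
theorem stmt_8 (N : ℕ) (hN : 1 ≤ N) (ξ : EuclideanSpace ℝ (Fin N))
    (a : ℝ) (ha : a = Real.log (1 + ‖ξ‖ ^ 2))
    (u u' u'' : ℝ → ℂ) (u₀ u₁ : ℂ)
    (hu : ∀ t : ℝ, HasDerivAt u (u' t) t)
    (hu' : ∀ t : ℝ, HasDerivAt u' (u'' t) t)
    (heq : ∀ t : ℝ, 0 ≤ t →
      u'' t + ((a ^ 2 / 4 : ℝ) : ℂ) * u t + ((Real.pi ^ 2 / 4 : ℝ) : ℂ) * u t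
        + (a : ℂ) * u' t = 0)
    (h₀ : u 0 = u₀) (h₁ : u' 0 = u₁) :
    ∀ t : ℝ, 0 ≤ t →
      ‖u' t‖ ^ 2 + (1 / 4) * a ^ 2 * ‖u t‖ ^ 2 + (Real.pi ^ 2 / 4) * ‖u t‖ ^ 2 ≤
        (9 / 2) * (‖u₁‖ ^ 2 + (1 / 4) * a ^ 2 * ‖u₀‖ ^ 2 + (Real.pi ^ 2 / 4) * ‖u₀‖ ^ 2)
          * Real.exp (-(phi ξ) * t) := by
  have hπ : Real.pi > 3.141592 := Real.pi_gt_d6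
  have ha0 : 0 ≤ a := by
    rw [ha]; exact Real.log_nonneg (by nlinarith [sq_nonneg ‖ξ‖])
  set ω2 : ℝ := a^2/4 + Real.pi^2/4 with hω2
  have hω : 0 < ω2 := by
    rw [hω2]
    nlinarith [mul_pos Real.pi_pos Real.pi_pos, sq_nonneg a]
  -- the condition in phi is equivalent to a ≤ 4/3
  have hcond : (‖ξ‖ ≤ Real.sqrt (Real.exp (4 / 3 : ℝ) - 1)) ↔ a ≤ 4/3 := by
    have h1 : (0:ℝ) ≤ Real.exp (4/3 : ℝ) - 1 := by
      have := Real.one_le_exp (by norm_num : (0:ℝ) ≤ 4/3)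
      linarith
    rw [Real.le_sqrt (norm_nonneg ξ) h1, ha, Real.log_le_iff_le_exp (by positivity)]
    constructor <;> intro h <;> linarith
  set κ : ℝ := min a (4/3 : ℝ) with hκdef
  set μ : ℝ := 2/3 * κ with hμdef
  have hκ0 : 0 ≤ κ := le_min ha0 (by norm_num)
  have hκa : κ ≤ a := min_le_left _ _
  have hκ43 : κ ≤ 4/3 := min_le_right _ _
  have hphi : phi ξ = μ := by
    unfold phi
    rcases le_or_gt ‖ξ‖ (Real.sqrt (Real.exp (4 / 3 : ℝ) - 1)) with hc | hc
    · rw [if_pos hc, hμdef, hκdef, min_eq_left (hcond.mp hc), ha]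
    · have h43 : 4/3 ≤ a := by
        by_contra hh
        exact hc.not_ge (hcond.mpr (le_of_not_ge fun h2 => hh (by linarith)))
      rw [if_neg (not_le.mpr hc), hμdef, hκdef, min_eq_right h43]
      norm_num
  have hκω : κ^2 ≤ ω2 := by
    rcases le_total a (4/3 : ℝ) with h | h
    · rw [hκdef, min_eq_left h, hω2]
      nlinarith [hπ, sq_nonneg a]
    · rw [hκdef, min_eq_right h, hω2]
      nlinarith [hπ, sq_nonneg a]
  have hkey : (κ*(a-μ))^2 ≤ 4*(2*a-κ-μ)*((κ-μ)*ω2) := by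
    rw [hμdef, hω2]
    rcases le_total a (4/3 : ℝ) with h | h
    · rw [hκdef, min_eq_left h]
      nlinarith [sq_nonneg a, sq_nonneg Real.pi, sq_nonneg (a*Real.pi), ha0]
    · rw [hκdef, min_eq_right h]
      nlinarith [hπ, mul_nonneg (mul_nonneg (by linarith : (0:ℝ) ≤ a - 4/3)
        (by linarith : (0:ℝ) ≤ a - 4/3)) (by linarith : (0:ℝ) ≤ a - 4/3),
        sq_nonneg (a - 4/3), sq_nonneg Real.pi]
  clear_value ω2 κ μ
  -- components
  have hnorm : ∀ z : ℂ, ‖z‖^2 = z.re^2 + z.im^2 := by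
    intro z
    rw [Complex.sq_norm, Complex.normSq_apply]; ring
  have hre : ∀ t, HasDerivAt (fun s => (u s).re) ((u' t).re) t := fun t =>
    (Complex.reCLM.hasFDerivAt.comp_hasDerivAt t (hu t))
  have hre' : ∀ t, HasDerivAt (fun s => (u' s).re) ((u'' t).re) t := fun t =>
    (Complex.reCLM.hasFDerivAt.comp_hasDerivAt t (hu' t))
  have him : ∀ t, HasDerivAt (fun s => (u s).im) ((u' t).im) t := fun t =>
    (Complex.imCLM.hasFDerivAt.comp_hasDerivAt t (hu t))
  have him' : ∀ t, HasDerivAt (fun s => (u' s).im) ((u'' t).im) t := fun t =>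
    (Complex.imCLM.hasFDerivAt.comp_hasDerivAt t (hu' t))
  have heqre : ∀ t, 0 ≤ t → (u'' t).re = -ω2 * (u t).re - a * (u' t).re := by
    intro t ht
    have h := congrArg Complex.re (heq t ht)
    simp only [Complex.add_re, Complex.re_ofReal_mul, Complex.zero_re] at h
    rw [hω2]; linarith
  have heqim : ∀ t, 0 ≤ t → (u'' t).im = -ω2 * (u t).im - a * (u' t).im := by
    intro t ht
    have h := congrArg Complex.im (heq t ht)
    simp only [Complex.add_im, Complex.im_ofReal_mul, Complex.zero_im] at h
    rw [hω2]; linarith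
  have hRe := energy_decay a κ μ ω2 hκ0 hκa hμdef hκω hω hkey _ _ _ hre hre' heqre
  have hIm := energy_decay a κ μ ω2 hκ0 hκa hμdef hκω hω hkey _ _ _ him him' heqim
  intro t ht
  have e1 := hRe t ht
  have e2 := hIm t ht
  rw [hphi]
  have hexp : (0:ℝ) < Real.exp (-μ * t) := Real.exp_pos _
  have hE0 : (0:ℝ) ≤ ‖u₁‖ ^ 2 + 1 / 4 * a ^ 2 * ‖u₀‖ ^ 2 + Real.pi ^ 2 / 4 * ‖u₀‖ ^ 2 := by
    positivity
  have hEt : ‖u' t‖ ^ 2 + 1 / 4 * a ^ 2 * ‖u t‖ ^ 2 + Real.pi ^ 2 / 4 * ‖u t‖ ^ 2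
      = ((u' t).re ^ 2 + ω2 * (u t).re ^ 2) + ((u' t).im ^ 2 + ω2 * (u t).im ^ 2) := by
    rw [hnorm, hnorm, hω2]; ring
  have hE0' : ‖u₁‖ ^ 2 + 1 / 4 * a ^ 2 * ‖u₀‖ ^ 2 + Real.pi ^ 2 / 4 * ‖u₀‖ ^ 2
      = ((u' 0).re ^ 2 + ω2 * (u 0).re ^ 2) + ((u' 0).im ^ 2 + ω2 * (u 0).im ^ 2) := by
    rw [← h₀, ← h₁, hnorm, hnorm, hω2]; ring
  rw [hEt, hE0']
  have h0nn : (0:ℝ) ≤ ((u' 0).re ^ 2 + ω2 * (u 0).re ^ 2)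
      + ((u' 0).im ^ 2 + ω2 * (u 0).im ^ 2) := by
    nlinarith [sq_nonneg (u' 0).re, sq_nonneg (u' 0).im,
      mul_nonneg hω.le (sq_nonneg (u 0).re), mul_nonneg hω.le (sq_nonneg (u 0).im)]
  nlinarith [e1, e2, mul_nonneg h0nn hexp.le]
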